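/- Let p_z be a bounded probability density on ℝ, and let g_θ : ℝ → ℝ be a family of functions, differentiable in z, satisfying the Lipschitz condition |g_θ(z) − g_{θ'}(z)| ≤ L_max ‖θ − θ'‖ for almost every z (with L_max < ∞) and inf_{(z,θ)} |g_θ'(z)| ≥ m > 0. Let F̃_θ(y₀) = ∫_ℝ 𝟙{g_θ(u) ≤ y₀} p_z(u) du be the cdf of g_θ(z) where z ∼ p_z. Then for every y₀ ∈ ℝ and all θ, θ' ∈ ℝ^d, |F̃_θ(y₀) − F̃_{θ'}(y₀)| ≤ L₁ ‖θ − θ'‖, where L₁ = ‖p_z‖_{L^∞(ℝ)} · 2 L_max / m. -/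

import Mathlib

open MeasureTheory Set

/-- Growth bound from mean value theorem. -/
lemma aux_growth {f : ℝ → ℝ} {m : ℝ} (hf : Differentiable ℝ f)
    (hd : ∀ z, m ≤ |deriv f z|) {u v : ℝ} (huv : u < v) :
    m * (v - u) ≤ |f v - f u| := by
  obtain ⟨c, -, hc⟩ := exists_hasDerivAt_eq_slope f (deriv f) huv
    hf.continuous.continuousOn (fun x _ => (hf x).hasDerivAt)
  have h := hd c
  rw [hc, abs_div, abs_of_pos (by linarith : (0:ℝ) < v - u)] at h
  exact (le_div_iff₀ (by linarith : (0:ℝ) < v - u)).mp h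

/-- Dichotomy: strictly monotone or strictly anti, via Darboux. -/
lemma aux_mono_or_anti {f : ℝ → ℝ} {m : ℝ} (hm : 0 < m) (hf : Differentiable ℝ f)
    (hd : ∀ z, m ≤ |deriv f z|) : StrictMono f ∨ StrictAnti f := by
  have hne : ∀ z, deriv f z ≠ 0 := by
    intro z h
    have := hd z
    rw [h, abs_zero] at this
    linarith
  have hderivs : ∀ x ∈ Set.univ, HasDerivWithinAt f (deriv f x) Set.univ x :=
    fun x _ => (hf x).hasDerivAt.hasDerivWithinAt
  by_cases hpos : ∀ z, 0 < deriv f z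
  · exact Or.inl (strictMono_of_deriv_pos hpos)
  · push_neg at hpos
    obtain ⟨z₀, hz₀⟩ := hpos
    have hz₀' : deriv f z₀ < 0 := lt_of_le_of_ne hz₀ (hne z₀)
    refine Or.inr (strictAnti_of_deriv_neg fun x => ?_)
    by_contra hx
    push_neg at hx
    have hx' : 0 < deriv f x := lt_of_le_of_ne hx (Ne.symm (hne x))
    have hders : ∀ a b : ℝ, ∀ y ∈ Set.Icc a b, HasDerivWithinAt f (deriv f y) (Set.Icc a b) y :=
      fun a b y _ => (hf y).hasDerivAt.hasDerivWithinAt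
    rcases le_or_gt x z₀ with h | h
    · obtain ⟨c, -, hc⟩ := exists_hasDerivWithinAt_eq_of_lt_of_gt h (hders x z₀) hx' hz₀'
      exact hne c hc
    · obtain ⟨c, -, hc⟩ := exists_hasDerivWithinAt_eq_of_gt_of_lt h.le (hders z₀ x) hz₀' hx'
      exact hne c hc

/-- Existence of a root of `f = y₀`. -/
lemma aux_root {f : ℝ → ℝ} {m : ℝ} (hm : 0 < m) (hcont : Continuous f)
    (hgrow : ∀ u v : ℝ, u < v → m * (v - u) ≤ |f v - f u|)
    (hmono : StrictMono f ∨ StrictAnti f) (y₀ : ℝ) : ∃ a, f a = y₀ := by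
  set T : ℝ := |y₀ - f 0| / m + 1 with hT
  have hT0 : 0 < T := by positivity
  have h1 := hgrow (-T) 0 (by linarith)
  have h2 := hgrow 0 T hT0
  have habs : |y₀ - f 0| < m * T := by
    rw [hT, mul_add, mul_div_cancel₀ _ hm.ne']
    nlinarith
  have hy1 : y₀ - f 0 ≤ |y₀ - f 0| := le_abs_self _
  have hy2 : -(y₀ - f 0) ≤ |y₀ - f 0| := neg_le_abs _
  rcases hmono with hmono | hanti
  · have e1 : f 0 - f (-T) = |f 0 - f (-T)| :=
      (abs_of_nonneg (by linarith [(hmono (show -T < 0 by linarith)).le])).symm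
    have e2 : f T - f 0 = |f T - f 0| := (abs_of_nonneg (by linarith [(hmono hT0).le])).symm
    have hmem : y₀ ∈ Set.Icc (f (-T)) (f T) := by
      constructor <;> nlinarith
    obtain ⟨a, ha⟩ := intermediate_value_univ (-T) T hcont hmem
    exact ⟨a, ha⟩
  · have e1 : f (-T) - f 0 = |f 0 - f (-T)| := by
      rw [abs_sub_comm]
      exact (abs_of_nonneg (by linarith [(hanti (show -T < 0 by linarith)).le])).symm
    have e2 : f 0 - f T = |f T - f 0| := by
      rw [abs_sub_comm]
      exact (abs_of_nonneg (by linarith [(hanti hT0).le])).symm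
    have hmem : y₀ ∈ Set.Icc (f T) (f (-T)) := by
      constructor <;> nlinarith
    obtain ⟨a, ha⟩ := intermediate_value_univ T (-T) hcont hmem
    exact ⟨a, ha⟩

/-- Bound on the difference of integrals over half-lines. -/
lemma aux_iic {pz : ℝ → ℝ} {Cz : ℝ} (hCz : 0 ≤ Cz) (hpz_nonneg : ∀ x, 0 ≤ pz x)
    (hpz_int : Integrable pz)
    (hpz_bdd : ∀ᵐ x ∂(volume : Measure ℝ), pz x ≤ Cz) (b c : ℝ) :
    |(∫ u in Set.Iic b, pz u) - ∫ u in Set.Iic c, pz u| ≤ Cz * |b - c| := by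
  -- wlog b ≤ c
  wlog hbc : b ≤ c generalizing b c
  · rw [abs_sub_comm, abs_sub_comm b c]
    exact this c b (le_of_not_ge hbc)
  have hsplit : (∫ u in Set.Iic c, pz u)
      = (∫ u in Set.Iic b, pz u) + ∫ u in Set.Ioc b c, pz u := by
    rw [← setIntegral_union (Iic_disjoint_Ioc le_rfl) measurableSet_Ioc
      (hpz_int.integrableOn) (hpz_int.integrableOn), Set.Iic_union_Ioc_eq_Iic hbc]
  have hnn : 0 ≤ ∫ u in Set.Ioc b c, pz u :=
    setIntegral_nonneg measurableSet_Ioc fun x _ => hpz_nonneg x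
  have hub : (∫ u in Set.Ioc b c, pz u) ≤ Cz * (c - b) := by
    have : (∫ u in Set.Ioc b c, pz u) ≤ ∫ _ in Set.Ioc b c, Cz := by
      refine setIntegral_mono_ae_restrict hpz_int.integrableOn ?_ (ae_restrict_of_ae hpz_bdd)
      exact integrableOn_const (by rw [Real.volume_Ioc]; exact ENNReal.ofReal_ne_top)
    rw [setIntegral_const, measureReal_def, Real.volume_Ioc, smul_eq_mul,
      ENNReal.toReal_ofReal (by linarith)] at this
    linarith
  rw [hsplit, abs_sub_comm, add_sub_cancel_left, abs_of_nonneg hnn,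
    abs_sub_comm, abs_of_nonneg (by linarith : (0:ℝ) ≤ c - b)]
  exact hub

/-- A strictly monotone and a strictly antitone function with growth `m` cannot stay
uniformly close. -/
lemma aux_no_mix {f h : ℝ → ℝ} {m c : ℝ} (hm : 0 < m)
    (hfg : ∀ u v : ℝ, u < v → m * (v - u) ≤ |f v - f u|)
    (hhg : ∀ u v : ℝ, u < v → m * (v - u) ≤ |h v - h u|)
    (hfm : StrictMono f) (hha : StrictAnti h)
    (hb : ∀ z, |f z - h z| ≤ c) : False := by
  have hA : 0 ≤ |f 0 - h 0| := abs_nonneg _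
  have hc0 : 0 ≤ c := le_trans (abs_nonneg _) (hb 0)
  obtain ⟨z, hz0, hzz⟩ : ∃ z : ℝ, 0 < z ∧ 2 * m * z = c + |f 0 - h 0| + 2 * m := by
    refine ⟨(c + |f 0 - h 0|) / (2 * m) + 1, ?_, by field_simp; try ring⟩
    have : 0 ≤ (c + |f 0 - h 0|) / (2 * m) := div_nonneg (by linarith) (by linarith)
    linarith
  have h1 := hfg 0 z hz0
  have h2 := hhg 0 z hz0
  rw [abs_of_pos (sub_pos.2 (hfm hz0))] at h1
  rw [abs_of_neg (sub_neg.2 (hha hz0))] at h2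
  have h4 := abs_le.1 (hb z)
  have h5 : -|f 0 - h 0| ≤ f 0 - h 0 := neg_abs_le _
  linarith

theorem cdf_lipschitz_in_param
    (d : ℕ) (pz : ℝ → ℝ) (Cz Lmax m : ℝ) (hm : 0 < m)
    (hpz_nonneg : ∀ x, 0 ≤ pz x) (hpz_int : Integrable pz)
    (hpz_one : ∫ x, pz x = 1)
    (hpz_bdd : ∀ᵐ x ∂(volume : Measure ℝ), pz x ≤ Cz)
    (g : EuclideanSpace ℝ (Fin d) → ℝ → ℝ)
    (hg_diff : ∀ θ, Differentiable ℝ (g θ))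
    (hg_lip : ∀ᵐ z ∂(volume : Measure ℝ),
      ∀ θ θ' : EuclideanSpace ℝ (Fin d), |g θ z - g θ' z| ≤ Lmax * ‖θ - θ'‖)
    (hg_deriv : ∀ (θ : EuclideanSpace ℝ (Fin d)) (z : ℝ), m ≤ |deriv (g θ) z|)
    (y₀ : ℝ) (θ θ' : EuclideanSpace ℝ (Fin d)) :
    |(∫ u in {u : ℝ | g θ u ≤ y₀}, pz u) - ∫ u in {u : ℝ | g θ' u ≤ y₀}, pz u|
      ≤ (Cz * (2 * Lmax) / m) * ‖θ - θ'‖ := by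
  rcases eq_or_ne θ θ' with rfl | hne
  · simp
  have hnorm : 0 < ‖θ - θ'‖ := by
    rw [norm_pos_iff, sub_ne_zero]; exact hne
  set t : ℝ := ‖θ - θ'‖ with ht
  -- a.e. bound upgrades to a pointwise bound by continuity
  have hptw : ∀ z, |g θ z - g θ' z| ≤ Lmax * t := by
    by_contra hcon
    push_neg at hcon
    obtain ⟨z, hz⟩ := hcon
    have hU : IsOpen {w : ℝ | Lmax * t < |g θ w - g θ' w|} :=
      isOpen_lt continuous_const (((hg_diff θ).continuous.sub (hg_diff θ').continuous).abs)
    have hnull : volume {w : ℝ | Lmax * t < |g θ w - g θ' w|} = 0 := by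
      refine measure_mono_null (fun w hw => ?_) (ae_iff.mp hg_lip)
      simp only [Set.mem_setOf_eq] at hw ⊢
      push_neg
      exact ⟨θ, θ', hw⟩
    have hempty := hU.eq_empty_of_measure_zero hnull
    exact absurd (hempty ▸ (show z ∈ {w : ℝ | Lmax * t < |g θ w - g θ' w|} from hz)) (Set.notMem_empty z)
  have hc0 : 0 ≤ Lmax * t := le_trans (abs_nonneg _) (hptw 0)
  have hLmax : 0 ≤ Lmax := nonneg_of_mul_nonneg_right (by rwa [mul_comm] at hc0) hnorm
  have hCz : 0 ≤ Cz := by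
    obtain ⟨x, hx⟩ := hpz_bdd.exists
    exact (hpz_nonneg x).trans hx
  have hgrow : ∀ τ : EuclideanSpace ℝ (Fin d), ∀ u v : ℝ, u < v →
      m * (v - u) ≤ |g τ v - g τ u| :=
    fun τ u v h => aux_growth (hg_diff τ) (hg_deriv τ) h
  have hma := aux_mono_or_anti hm (hg_diff θ) (hg_deriv θ)
  have hma' := aux_mono_or_anti hm (hg_diff θ') (hg_deriv θ')
  obtain ⟨a, ha⟩ := aux_root hm (hg_diff θ).continuous (hgrow θ) hma y₀
  obtain ⟨a', ha'⟩ := aux_root hm (hg_diff θ').continuous (hgrow θ') hma' y₀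
  -- the two roots are close
  have hdist : m * |a' - a| ≤ Lmax * t := by
    rcases lt_trichotomy a a' with h | h | h
    · have h1 := hgrow θ a a' h
      rw [ha, ← ha'] at h1
      rw [abs_of_pos (by linarith : (0:ℝ) < a' - a)]
      exact h1.trans (hptw a')
    · simpa [h] using hc0
    · have h1 := hgrow θ a' a h
      rw [ha, ← ha', abs_sub_comm] at h1
      rw [abs_of_neg (by linarith : a' - a < 0), neg_sub]
      exact h1.trans (hptw a')
  have final : Cz * |a - a'| ≤ (Cz * (2 * Lmax) / m) * t := by
    rw [abs_sub_comm, div_mul_eq_mul_div, le_div_iff₀ hm]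
    nlinarith [mul_le_mul_of_nonneg_left hdist hCz, mul_nonneg (mul_nonneg hCz hLmax) hnorm.le,
      abs_nonneg (a' - a)]
  rcases hma with hmθ | haθ <;> rcases hma' with hmθ' | haθ'
  · -- both strictly monotone
    have e1 : {u : ℝ | g θ u ≤ y₀} = Set.Iic a := by
      ext u; simp [← ha, hmθ.le_iff_le]
    have e2 : {u : ℝ | g θ' u ≤ y₀} = Set.Iic a' := by
      ext u; simp [← ha', hmθ'.le_iff_le]
    rw [e1, e2]
    exact (aux_iic hCz hpz_nonneg hpz_int hpz_bdd a a').trans final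
  · exact absurd (aux_no_mix hm (hgrow θ) (hgrow θ') hmθ haθ' hptw) id
  · refine absurd (aux_no_mix (c := Lmax * t) hm (hgrow θ') (hgrow θ) hmθ' haθ (fun z => ?_)) id
    rw [abs_sub_comm]; exact hptw z
  · -- both strictly antitone
    have e1 : {u : ℝ | g θ u ≤ y₀} = Set.Ici a := by
      ext u; simp [← ha, haθ.le_iff_ge]
    have e2 : {u : ℝ | g θ' u ≤ y₀} = Set.Ici a' := by
      ext u; simp [← ha', haθ'.le_iff_ge]
    have hIci : ∀ x : ℝ, (∫ u in Set.Ici x, pz u) = (∫ u, pz u) - ∫ u in Set.Iic x, pz u := by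
      intro x
      rw [integral_Iic_eq_integral_Iio, eq_sub_iff_add_eq, add_comm]
      exact intervalIntegral.integral_Iio_add_Ici hpz_int.integrableOn hpz_int.integrableOn
    rw [e1, e2, hIci a, hIci a']
    have : (∫ u, pz u) - (∫ u in Set.Iic a, pz u) - ((∫ u, pz u) - ∫ u in Set.Iic a', pz u)
        = (∫ u in Set.Iic a', pz u) - ∫ u in Set.Iic a, pz u := by ring
    rw [this, abs_sub_comm]
    exact (aux_iic hCz hpz_nonneg hpz_int hpz_bdd a a').trans final
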